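/- For every positive integer n, the sum over k from 1 to n of (-5)^{k-1} * (k/(n+k)) * C(n+k, n-k) equals (-1)^{n-1} · F_{2n}/2. -/

import Mathlib

open Finset

private def Gq (n : ℕ) : ℚ := ∑ j ∈ range n, (-5 : ℚ) ^ j * (Nat.choose (n + j) (2 * j + 1))

private def Hq (n : ℕ) : ℚ := ∑ j ∈ range (n + 1), (-5 : ℚ) ^ j * (Nat.choose (n + j) (2 * j))

private lemma GH (n : ℕ) : Gq (n + 1) = Gq n + Hq n := by
  unfold Gq Hq
  have h : ∀ j ∈ range (n + 1),
      (-5 : ℚ) ^ j * (Nat.choose (n + 1 + j) (2 * j + 1)) =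
      (-5 : ℚ) ^ j * (Nat.choose (n + j) (2 * j)) +
      (-5 : ℚ) ^ j * (Nat.choose (n + j) (2 * j + 1)) := by
    intro j _
    have : n + 1 + j = (n + j) + 1 := by ring
    rw [this, Nat.choose_succ_succ]
    push_cast
    ring
  rw [Finset.sum_congr rfl h, Finset.sum_add_distrib,
    Finset.sum_range_succ (fun x => (-5 : ℚ) ^ x * (Nat.choose (n + x) (2 * x))),
    Finset.sum_range_succ (fun x => (-5 : ℚ) ^ x * (Nat.choose (n + x) (2 * x + 1)))]
  have hz : Nat.choose (n + n) (2 * n + 1) = 0 := by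
    apply Nat.choose_eq_zero_of_lt; omega
  rw [hz]
  push_cast
  ring

private lemma Hrec (n : ℕ) : Hq (n + 1) = Hq n - 5 * Gq (n + 1) := by
  unfold Gq Hq
  rw [Finset.sum_range_succ' (fun j => (-5 : ℚ) ^ j * (Nat.choose (n + 1 + j) (2 * j)))]
  have h : ∀ i ∈ range (n + 1),
      (-5 : ℚ) ^ (i + 1) * (Nat.choose (n + 1 + (i + 1)) (2 * (i + 1))) =
      (-5 : ℚ) ^ (i + 1) * (Nat.choose (n + 1 + i) (2 * i + 1)) +
      (-5 : ℚ) ^ (i + 1) * (Nat.choose (n + 1 + i) (2 * (i + 1))) := by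
    intro i _
    have h1 : n + 1 + (i + 1) = (n + 1 + i) + 1 := by ring
    have h2 : 2 * (i + 1) = (2 * i + 1) + 1 := by ring
    rw [h1, h2, Nat.choose_succ_succ]
    push_cast
    ring
  rw [Finset.sum_congr rfl h, Finset.sum_add_distrib]
  have e1 : ∑ i ∈ range (n + 1), (-5 : ℚ) ^ (i + 1) * (Nat.choose (n + 1 + i) (2 * i + 1)) =
      -5 * ∑ j ∈ range (n + 1), (-5 : ℚ) ^ j * (Nat.choose (n + 1 + j) (2 * j + 1)) := by
    rw [Finset.mul_sum]
    apply Finset.sum_congr rfl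
    intro i _
    ring
  have e2 : ∑ i ∈ range (n + 1), (-5 : ℚ) ^ (i + 1) * (Nat.choose (n + 1 + i) (2 * (i + 1))) =
      ∑ j ∈ range (n + 1), (-5 : ℚ) ^ j * (Nat.choose (n + j) (2 * j)) - 1 := by
    rw [Finset.sum_range_succ' (fun j => (-5 : ℚ) ^ j * (Nat.choose (n + j) (2 * j)))]
    have hcongr : ∀ i ∈ range n,
        (-5 : ℚ) ^ (i + 1) * (Nat.choose (n + (i + 1)) (2 * (i + 1))) =
        (-5 : ℚ) ^ (i + 1) * (Nat.choose (n + 1 + i) (2 * (i + 1))) := by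
      intro i _
      have : n + (i + 1) = n + 1 + i := by ring
      rw [this]
    rw [Finset.sum_congr rfl hcongr]
    rw [Finset.sum_range_succ (fun i => (-5 : ℚ) ^ (i + 1) * (Nat.choose (n + 1 + i) (2 * (i + 1))))]
    have hz : Nat.choose (n + 1 + n) (2 * (n + 1)) = 0 := by
      apply Nat.choose_eq_zero_of_lt; omega
    rw [hz]
    simp
  rw [e1, e2]
  simp
  ring

private lemma key (n : ℕ) :
    Gq (n + 1) = (-1 : ℚ) ^ n * (Nat.fib (2 * n + 2) : ℚ) ∧
    Hq n = (-1 : ℚ) ^ n * ((Nat.fib (2 * n) : ℚ) + (Nat.fib (2 * n + 2) : ℚ)) := by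
  induction n with
  | zero =>
    constructor
    · unfold Gq; simp [Nat.fib]
    · unfold Hq; simp [Nat.fib]
  | succ m ih =>
    obtain ⟨hG, hH⟩ := ih
    have hHs : Hq (m + 1) = (-1 : ℚ) ^ (m + 1) *
        ((Nat.fib (2 * (m + 1)) : ℚ) + (Nat.fib (2 * (m + 1) + 2) : ℚ)) := by
      rw [Hrec, hH, hG]
      have f1 : 2 * (m + 1) = 2 * m + 2 := by ring
      rw [f1, Nat.fib_add_two (n := 2 * m + 2),
        show 2 * m + 2 + 1 = 2 * m + 1 + 2 from by omega,
        Nat.fib_add_two (n := 2 * m + 1),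
        show 2 * m + 1 + 1 = 2 * m + 2 from by omega,
        Nat.fib_add_two (n := 2 * m)]
      push_cast
      ring
    refine ⟨?_, hHs⟩
    rw [GH, hG, hHs]
    have f1 : 2 * (m + 1) = 2 * m + 2 := by ring
    rw [f1, Nat.fib_add_two (n := 2 * m + 2),
      show 2 * m + 2 + 1 = 2 * m + 1 + 2 from by omega,
      Nat.fib_add_two (n := 2 * m + 1),
      show 2 * m + 1 + 1 = 2 * m + 2 from by omega,
      Nat.fib_add_two (n := 2 * m)]
    push_cast
    ring

theorem stmt_17 (n : ℕ) (hn : 0 < n) :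
    ∑ k ∈ Icc 1 n, (-5 : ℚ) ^ (k - 1) * ((k : ℚ) / (n + k)) *
      (Nat.choose (n + k) (n - k)) =
    (-1 : ℚ) ^ (n - 1) * (Nat.fib (2 * n) : ℚ) / 2 := by
  have hsum : ∑ k ∈ Icc 1 n, (-5 : ℚ) ^ (k - 1) * ((k : ℚ) / (n + k)) *
      (Nat.choose (n + k) (n - k)) = Gq n / 2 := by
    rw [show Icc 1 n = Ico 1 (n + 1) from (by ext x; simp only [Finset.mem_Icc, Finset.mem_Ico]; omega),
      Finset.sum_Ico_eq_sum_range]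
    unfold Gq
    have hr : n + 1 - 1 = n := by omega
    rw [hr, Finset.sum_div]
    apply Finset.sum_congr rfl
    intro j hj
    rw [Finset.mem_range] at hj
    -- k = 1 + j
    have hk1 : (1 + j) - 1 = j := by omega
    rw [hk1]
    -- choose symm
    have hle : j + 1 ≤ n := hj
    have hsub : n - (1 + j) = (n + (1 + j)) - (2 * j + 2) := by omega
    have hchoose : Nat.choose (n + (1 + j)) (n - (1 + j)) =
        Nat.choose (n + (1 + j)) (2 * j + 2) := by
      rw [hsub]
      exact Nat.choose_symm (by omega)
    rw [hchoose]
    -- key nat identity : (n+j+1)*C(n+j,2j+1) = C(n+j+1,2j+2)*(2j+2)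
    have hnat : (n + j + 1) * Nat.choose (n + j) (2 * j + 1) =
        Nat.choose (n + j + 1) (2 * j + 2) * (2 * j + 2) :=
      Nat.add_one_mul_choose_eq (n + j) (2 * j + 1)
    have hnatq : ((n : ℚ) + j + 1) * (Nat.choose (n + j) (2 * j + 1) : ℚ) =
        (Nat.choose (n + j + 1) (2 * j + 2) : ℚ) * (2 * j + 2) := by
      exact_mod_cast hnat
    have hidx : n + (1 + j) = n + j + 1 := by ring
    rw [hidx]
    push_cast
    have hpos : (n : ℚ) + (1 + j) ≠ 0 := by positivity
    field_simp
    linear_combination -hnatq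
  rw [hsum]
  obtain ⟨m, rfl⟩ : ∃ m, n = m + 1 := ⟨n - 1, by omega⟩
  have := (key m).1
  rw [this]
  have f1 : 2 * (m + 1) = 2 * m + 2 := by ring
  have f2 : m + 1 - 1 = m := by omega
  rw [f1, f2]
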